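/- In any algebra (S,*,') satisfying the three axioms, the identity x' * x'' = x' * x holds for all x in S. -/
import Mathlib


theorem stmt (S : Type*) (m : S → S → S) (i : S → S)
    (E1 : ∀ x, m (m x (i x)) x = x)
    (E2 : ∀ x y, m (m x (i x)) (m (i y) y) = m (m (i y) y) (m x (i x)))
    (E3 : ∀ x y z, m (m x y) z = m x (m y (i (i z)))) :
    ∀ x, m (i x) (i (i x)) = m (i x) x := by
  have L3 : ∀ x, m x (m (i x) (i (i x))) = x := by
    intro x
    rw [← E3 x (i x) x, E1]
  have L5 : ∀ x z, m x (m (i x) (m (i (i x)) (i (i (i (i z)))))) = m x z := by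
    intro x z
    rw [← E3 (i x) (i (i x)) (i (i z)), ← E3 x (m (i x) (i (i x))) z, L3]
  intro x
  conv_lhs => rw [← L3 (i (i x))]
  exact L5 (i x) x
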